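/- A permutation of length n is sortable by a single stack if and only if it avoids the pattern 231, i.e., there are no indices i < j < k with p(k) < p(i) < p(j). -/

import Mathlib

/-- A configuration for sorting with `t` stacks in series: the remaining input,
the stacks (index `0` is the leftmost, next to the output; index `t-1` is the
rightmost, next to the input; the head of each list is the top of the stack),
and the output produced so far. -/
structure Conf where
  input : List ℕ
  stks : List (List ℕ)
  output : List ℕ
deriving DecidableEq, Repr

/-- `x` may be placed on top of a stack iff the stack is empty or `x` is smaller
than the current top (stacks are increasing from top to bottom). -/
def canPush (x : ℕ) : List ℕ → Bool
  | [] => true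
  | y :: _ => decide (x < y)

/-- Moves, ordered left to right: `0` = pop the leftmost stack to the output
(legal only for the next element of the identity); `m` with `0 < m < t` = move the
top of stack `m` one stack to the left; `t` = push the next input element onto the
rightmost stack. -/
def legal (t : ℕ) (c : Conf) (m : ℕ) : Bool :=
  if m = 0 then
    match c.stks.getD 0 [] with
    | x :: _ => x == c.output.length + 1
    | [] => false
  else if m < t then
    match c.stks.getD m [] with
    | x :: _ => canPush x (c.stks.getD (m-1) [])
    | [] => false
  else if m = t then
    match c.input with
    | x :: _ => canPush x (c.stks.getD (t-1) [])
    | [] => false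
  else false

/-- Perform move `m` on configuration `c` (with `t` stacks). -/
def applyMove (t : ℕ) (c : Conf) (m : ℕ) : Conf :=
  if m = 0 then
    match c.stks.getD 0 [] with
    | x :: s => ⟨c.input, c.stks.set 0 s, c.output ++ [x]⟩
    | [] => c
  else if m < t then
    match c.stks.getD m [] with
    | x :: s => ⟨c.input, (c.stks.set m s).set (m-1) (x :: c.stks.getD (m-1) []), c.output⟩
    | [] => c
  else
    match c.input with
    | x :: rest => ⟨rest, c.stks.set (t-1) (x :: c.stks.getD (t-1) []), c.output⟩
    | [] => c

def initConf (t : ℕ) (p : List ℕ) : Conf := ⟨p, List.replicate t [], []⟩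

/-- The fully sorted configuration: empty input and stacks, output `1,2,...,n`. -/
def finalConf (t n : ℕ) : Conf := ⟨[], List.replicate t [], List.range' 1 n⟩

/-- Run a sequence of moves, requiring each to be legal. -/
def runLegal (t : ℕ) : Conf → List ℕ → Option Conf
  | c, [] => some c
  | c, m :: ms => if legal t c m then runLegal t (applyMove t c m) ms else none

/-- `p` is sortable by `t` stacks in series by some sequence of legal moves. -/
def Sortable (t : ℕ) (p : List ℕ) : Prop :=
  ∃ ms : List ℕ, runLegal t (initConf t p) ms = some (finalConf t p.length)

/-- The leftmost legal move, if any. -/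
def leftMove (t : ℕ) (c : Conf) : Option ℕ :=
  ((List.range (t+1)).filter (fun m => legal t c m)).head?

/-- The rightmost legal move, if any. -/
def rightMove (t : ℕ) (c : Conf) : Option ℕ :=
  ((List.range (t+1)).filter (fun m => legal t c m)).getLast?

/-- One step of a greedy algorithm given by the move selector `mv`
(the configuration is unchanged if no move is legal, i.e. the algorithm fails or is done). -/
def greedyStep (mv : ℕ → Conf → Option ℕ) (t : ℕ) (c : Conf) : Conf :=
  match mv t c with
  | some m => applyMove t c m
  | none => c

/-- The greedy algorithm given by `mv` sorts `p` with `t` stacks in series. -/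
def GreedySorts (mv : ℕ → Conf → Option ℕ) (t : ℕ) (p : List ℕ) : Prop :=
  ∃ k : ℕ, (greedyStep mv t)^[k] (initConf t p) = finalConf t p.length

def LeftGreedySorts : ℕ → List ℕ → Prop := GreedySorts leftMove
def RightGreedySorts : ℕ → List ℕ → Prop := GreedySorts rightMove

/-- `p` is a permutation of `1,...,n` (as a list). -/
def IsPermOf (n : ℕ) (p : List ℕ) : Prop := p.Perm (List.range' 1 n)

/-- The position of the element `x` in configuration `c`: `0` if in the output
(furthest left), `j+1` if in stack `j`, `t+1` if still in the input (furthest right). -/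
def posOf (t : ℕ) (c : Conf) (x : ℕ) : ℕ :=
  if x ∈ c.output then 0
  else match (List.range t).find? (fun j => decide (x ∈ c.stks.getD j [])) with
    | some j => j + 1
    | none => t + 1

/-- `c` is at the `i`-th critical moment for the greedy algorithm `mv` on a
permutation of length `n`: either the chosen move is the entry of the `i`-th
element into the stacks, or the algorithm fails (no legal move, incomplete output). -/
def IsCrit (mv : ℕ → Conf → Option ℕ) (t i n : ℕ) (c : Conf) : Prop :=
  (c.input.length + i = n + 1 ∧ mv t c = some t) ∨
  (mv t c = none ∧ c.output.length < n)

/-- `c` is the configuration at the `i`-th critical moment of the greedy algorithm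
`mv` run on `p` (the first moment along the run satisfying `IsCrit`). -/
def CritConf (mv : ℕ → Conf → Option ℕ) (t i n : ℕ) (p : List ℕ) (c : Conf) : Prop :=
  ∃ k : ℕ, (greedyStep mv t)^[k] (initConf t p) = c ∧ IsCrit mv t i n c ∧
    ∀ k' < k, ¬ IsCrit mv t i n ((greedyStep mv t)^[k'] (initConf t p))

/-- No stack is empty while some stack to its right is nonempty. -/
def NoGap (t : ℕ) (c : Conf) : Prop :=
  ∀ j j' : ℕ, j < j' → j' < t → c.stks.getD j' [] ≠ [] → c.stks.getD j [] ≠ []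

/-- `r` contains `q` as a pattern. -/
def ContainsPat (r q : List ℕ) : Prop :=
  ∃ f : Fin q.length → Fin r.length, StrictMono f ∧
    ∀ a b : Fin q.length, q.get a < q.get b ↔ r.get (f a) < r.get (f b)


section StackSortAux

lemma legal_pop_cons (inp out : List ℕ) (x : ℕ) (s : List ℕ) :
    legal 1 ⟨inp, [x :: s], out⟩ 0 = (x == out.length + 1) := rfl

lemma legal_push_cons (x : ℕ) (rest out : List ℕ) (s : List ℕ) :
    legal 1 ⟨x :: rest, [s], out⟩ 1 = canPush x s := rfl

lemma apply_pop_cons (inp out : List ℕ) (x : ℕ) (s : List ℕ) :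
    applyMove 1 ⟨inp, [x :: s], out⟩ 0 = ⟨inp, [s], out ++ [x]⟩ := rfl

lemma apply_push_cons (x : ℕ) (rest out : List ℕ) (s : List ℕ) :
    applyMove 1 ⟨x :: rest, [s], out⟩ 1 = ⟨rest, [x :: s], out⟩ := rfl

/-- `l` avoids the pattern 231 (sublist form). -/
def Av3 (l : List ℕ) : Prop := ¬ ∃ a b c : ℕ, List.Sublist [a, b, c] l ∧ c < a ∧ a < b

/-- No later "big then small" straddling `y` occurs in `l`. -/
def Av2 (y : ℕ) (l : List ℕ) : Prop := ¬ ∃ b c : ℕ, List.Sublist [b, c] l ∧ c < y ∧ y < b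

lemma Av3.mono {l l' : List ℕ} (h : List.Sublist l' l) (ha : Av3 l) : Av3 l' := by
  rintro ⟨a, b, c, hs, h1, h2⟩
  exact ha ⟨a, b, c, hs.trans h, h1, h2⟩

lemma Av2.mono {y : ℕ} {l l' : List ℕ} (h : List.Sublist l' l) (ha : Av2 y l) : Av2 y l' := by
  rintro ⟨b, c, hs, h1, h2⟩
  exact ha ⟨b, c, hs.trans h, h1, h2⟩

/-- The invariant characterizing sortable configurations for one stack. -/
def Good (n : ℕ) (c : Conf) : Prop :=
  ∃ s : List ℕ, c.stks = [s] ∧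
    c.output = List.range' 1 c.output.length ∧
    (c.output ++ s ++ c.input).Perm (List.range' 1 n) ∧
    s.Pairwise (· < ·) ∧
    Av3 c.input ∧
    ∀ y ∈ s, Av2 y c.input

lemma mem_out_le {out : List ℕ} (hout : out = List.range' 1 out.length) {y : ℕ}
    (h : y ∈ out) : 1 ≤ y ∧ y ≤ out.length := by
  rw [hout, List.mem_range'_1] at h
  omega

lemma mem_big {n : ℕ} {out s inp : List ℕ}
    (hout : out = List.range' 1 out.length)
    (hperm : (out ++ s ++ inp).Perm (List.range' 1 n))
    {y : ℕ} (hy : y ∈ s ++ inp) : out.length + 1 ≤ y ∧ y ≤ n := by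
  have hnd : (out ++ (s ++ inp)).Nodup := by
    rw [← List.append_assoc]
    exact hperm.nodup_iff.mpr (List.nodup_range' (s := 1) (n := n))
  have hmem : y ∈ List.range' 1 n := hperm.subset (by
    simp only [List.append_assoc, List.mem_append]
    simp only [List.mem_append] at hy; tauto)
  have hno : y ∉ out := fun hyo => (List.disjoint_of_nodup_append hnd) hyo hy
  rw [List.mem_range'_1] at hmem
  refine ⟨?_, by omega⟩
  by_contra hcon
  exact hno (by rw [hout, List.mem_range'_1]; omega)

lemma good_final (n : ℕ) : Good n (finalConf 1 n) := by
  refine ⟨[], rfl, ?_, ?_, ?_, ?_, ?_⟩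
  · simp [finalConf]
  · simp [finalConf]
  · simp [finalConf]
  · rintro ⟨a, b, c, hs, -, -⟩
    simp [finalConf] at hs
  · simp [finalConf]

lemma range'_concat_one (m : ℕ) : List.range' 1 (m + 1) = List.range' 1 m ++ [m + 1] := by
  rw [List.range'_concat]
  congr 2
  omega

lemma good_back {n : ℕ} {c : Conf} {m : ℕ} (hl : legal 1 c m = true)
    (hg : Good n (applyMove 1 c m)) : Good n c := by
  obtain ⟨inp, stks, out⟩ := c
  rcases Nat.lt_or_ge m 2 with hm | hm
  · interval_cases m
    · -- pop
      rcases stks with _ | ⟨w, rest⟩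
      · simp [legal] at hl
      rcases w with _ | ⟨x, s0⟩
      · simp [legal] at hl
      have hx : x = out.length + 1 := by simpa [legal] using hl
      have happ : applyMove 1 ⟨inp, (x :: s0) :: rest, out⟩ 0 = ⟨inp, s0 :: rest, out ++ [x]⟩ := by
        simp [applyMove]
      rw [happ] at hg
      obtain ⟨s, hstks, hout, hperm, hsort, hav3, hav2⟩ := hg
      simp only at hstks hout hperm hav3 hav2
      obtain ⟨hs0, hrest⟩ : s0 = s ∧ rest = [] := by simpa using hstks
      subst hs0; subst hrest
      have houtx : out = List.range' 1 out.length := by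
        have h1 : out ++ [x] = List.range' 1 out.length ++ [out.length + 1] := by
          rw [← range'_concat_one]
          simpa using hout
        exact (List.append_inj' h1 rfl).1
      refine ⟨x :: s0, rfl, houtx, ?_, ?_, hav3, ?_⟩
      · have heq : out ++ (x :: s0) ++ inp = (out ++ [x]) ++ s0 ++ inp := by simp
        rw [heq]; exact hperm
      · rw [List.pairwise_cons]
        refine ⟨fun b hb => ?_, hsort⟩
        have := mem_big hout hperm (y := b) (by simp [hb])
        simp only [List.length_append, List.length_cons, List.length_nil] at this
        omega
      · intro y hy
        rcases List.mem_cons.mp hy with hy | hy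
        · rintro ⟨b, c, hs, h1, h2⟩
          have hc : c ∈ inp := hs.subset (by simp)
          have := mem_big hout hperm (y := c) (by simp [hc])
          simp only [List.length_append, List.length_cons, List.length_nil] at this
          omega
        · exact hav2 y hy
    · -- push
      rcases inp with _ | ⟨x, rest'⟩
      · simp [legal] at hl
      rcases stks with _ | ⟨w, rest⟩
      · obtain ⟨s, hstks, -⟩ := hg
        simp [applyMove] at hstks
      have happ : applyMove 1 ⟨x :: rest', w :: rest, out⟩ 1 = ⟨rest', (x :: w) :: rest, out⟩ := by
        simp [applyMove]
      rw [happ] at hg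
      obtain ⟨s, hstks, hout, hperm, hsort, hav3, hav2⟩ := hg
      simp only at hstks hout hperm hav3 hav2
      obtain ⟨hs0, hrest⟩ : x :: w = s ∧ rest = [] := by simpa using hstks
      subst hrest
      rcases hs0
      refine ⟨w, rfl, hout, ?_, (List.pairwise_cons.mp hsort).2, ?_, ?_⟩
      · refine List.Perm.trans ?_ hperm
        have heq1 : out ++ w ++ (x :: rest') = out ++ (w ++ x :: rest') := by simp
        have heq2 : out ++ (x :: w) ++ rest' = out ++ (x :: (w ++ rest')) := by simp
        rw [heq1, heq2]
        exact (List.perm_middle (a := x) (l₁ := w) (l₂ := rest')).append_left out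
      · rintro ⟨a, b, c, hs, h1, h2⟩
        cases hs with
        | cons _ hs' => exact hav3 ⟨a, b, c, hs', h1, h2⟩
        | cons_cons _ hs' => exact hav2 x (by simp) ⟨b, c, hs', h1, h2⟩
      · intro y hy
        rintro ⟨b, c, hs, h1, h2⟩
        cases hs with
        | cons _ hs' => exact hav2 y (by simp [hy]) ⟨b, c, hs', h1, h2⟩
        | cons_cons _ hs' =>
          have hxy : x < y := (List.pairwise_cons.mp hsort).1 y hy
          omega
  · exfalso
    have h0 : ¬ (m = 0) := by omega
    have h1 : ¬ (m < 1) := by omega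
    have h2 : ¬ (m = 1) := by omega
    simp [legal, h0, h1, h2] at hl

lemma good_of_run {n : ℕ} (ms : List ℕ) : ∀ c : Conf,
    runLegal 1 c ms = some (finalConf 1 n) → Good n c := by
  induction ms with
  | nil =>
    intro c h
    simp only [runLegal, Option.some.injEq] at h
    exact h ▸ good_final n
  | cons m ms ih =>
    intro c h
    rw [runLegal] at h
    by_cases hl : legal 1 c m
    · rw [if_pos hl] at h
      exact good_back hl (ih _ h)
    · rw [if_neg hl] at h
      exact absurd h (by simp)

lemma good_step {n : ℕ} {c : Conf} (hg : Good n c) (hne : c ≠ finalConf 1 n) :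
    ∃ m, legal 1 c m = true ∧ Good n (applyMove 1 c m) ∧
      2 * (applyMove 1 c m).input.length + ((applyMove 1 c m).stks.getD 0 []).length
        < 2 * c.input.length + (c.stks.getD 0 []).length := by
  obtain ⟨s, hstks, hout, hperm, hsort, hav3, hav2⟩ := hg
  obtain ⟨inp, stks, out⟩ := c
  simp only at hstks hout hperm hav3 hav2
  subst hstks
  by_cases hpop : ∃ s0, s = (out.length + 1) :: s0
  · -- pop is legal and keeps Good
    obtain ⟨s0, rfl⟩ := hpop
    refine ⟨0, ?_, ?_, ?_⟩
    · rw [legal_pop_cons]; simp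
    · rw [apply_pop_cons]
      refine ⟨s0, rfl, ?_, ?_, (List.pairwise_cons.mp hsort).2, hav3, ?_⟩
      · simp only [List.length_append, List.length_cons, List.length_nil]
        rw [range'_concat_one, ← hout]
      · have heq : (out ++ [out.length + 1]) ++ s0 ++ inp
            = out ++ ((out.length + 1) :: s0) ++ inp := by simp
        rw [heq]; exact hperm
      · intro y hy
        exact hav2 y (by simp [hy])
    · rw [apply_pop_cons]; simp
  · -- push is legal and keeps Good
    have hnd : ((out ++ ((s ++ inp)))).Nodup := by
      rw [← List.append_assoc]
      exact hperm.nodup_iff.mpr (List.nodup_range' (s := 1) (n := n))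
    have hndsi : (s ++ inp).Nodup := hnd.of_append_right
    rcases inp with _ | ⟨x, rest⟩
    · exfalso
      rcases s with _ | ⟨y, s0⟩
      · -- c is final
        apply hne
        have hlen : out.length = n := by
          have := hperm.length_eq
          simpa using this
        have hfin : out = List.range' 1 n := by rw [← hlen]; exact hout
        rw [hfin]; rfl
      · -- out.length + 1 is nowhere
        have hy1 : out.length + 1 ≤ y := (mem_big hout hperm (y := y) (by simp)).1
        have hyne : y ≠ out.length + 1 := fun h => hpop ⟨s0, by rw [h]⟩
        have hlen : out.length < n := by
          have := hperm.length_eq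
          simp only [List.length_append, List.length_cons, List.length_nil,
            List.length_range'] at this
          omega
        have hm1 : out.length + 1 ∈ out ++ (y :: s0) ++ ([] : List ℕ) :=
          (hperm.mem_iff).mpr (by rw [List.mem_range'_1]; omega)
        simp only [List.append_nil, List.mem_append, List.mem_cons] at hm1
        rcases hm1 with h | h
        · have := mem_out_le hout h; omega
        · rcases h with h | h
          · omega
          · have := (List.pairwise_cons.mp hsort).1 _ h; omega
    -- the push move is legal
    have hcan : canPush x s = true := by
      rcases s with _ | ⟨y, s0⟩
      · rfl
      · simp only [canPush, decide_eq_true_eq]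
        by_contra hxy
        push_neg at hxy
        have hxney : x ≠ y := by
          intro h
          have hdisj := List.disjoint_of_nodup_append hndsi
          exact hdisj (List.mem_cons_self (a := y) (l := s0)) (by simp [h])
        have hyx : y < x := by omega
        have hy1 : out.length + 1 ≤ y := (mem_big hout hperm (y := y) (by simp)).1
        have hyne : y ≠ out.length + 1 := fun h => hpop ⟨s0, by rw [h]⟩
        have hlen : out.length < n := by
          have := hperm.length_eq
          simp only [List.length_append, List.length_cons, List.length_nil,
            List.length_range'] at this
          omega
        have hm1 : out.length + 1 ∈ out ++ (y :: s0) ++ (x :: rest) :=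
          (hperm.mem_iff).mpr (by rw [List.mem_range'_1]; omega)
        simp only [List.mem_append, List.mem_cons] at hm1
        rcases hm1 with (h | h | h) | (h | h)
        · have := mem_out_le hout h; omega
        · omega
        · have := (List.pairwise_cons.mp hsort).1 _ h; omega
        · omega
        · refine hav2 y (List.mem_cons_self (a := y) (l := s0)) ⟨x, out.length + 1, ?_, by omega, by omega⟩
          exact List.Sublist.cons_cons x (List.singleton_sublist.mpr h)
    refine ⟨1, ?_, ?_, ?_⟩
    · rw [legal_push_cons]; exact hcan
    · rw [apply_push_cons]
      refine ⟨x :: s, rfl, hout, ?_, ?_, ?_, ?_⟩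
      · refine List.Perm.trans ?_ hperm
        have heq1 : out ++ (x :: s) ++ rest = out ++ ((x :: s) ++ rest) := by simp
        have heq2 : out ++ s ++ (x :: rest) = out ++ (s ++ x :: rest) := by simp
        rw [heq1, heq2]
        refine List.Perm.append_left out ?_
        have : (x :: s) ++ rest = x :: (s ++ rest) := rfl
        rw [this]
        exact (List.perm_middle (a := x) (l₁ := s) (l₂ := rest)).symm
      · rw [List.pairwise_cons]
        refine ⟨fun b hb => ?_, hsort⟩
        rcases s with _ | ⟨y, s0⟩
        · simp at hb
        · have hxy : x < y := by simpa [canPush] using hcan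
          rcases List.mem_cons.mp hb with rfl | hb
          · exact hxy
          · exact lt_trans hxy ((List.pairwise_cons.mp hsort).1 _ hb)
      · exact hav3.mono (List.sublist_cons_self x rest)
      · intro y hy
        rcases List.mem_cons.mp hy with rfl | hy
        · rintro ⟨b, c, hs, h1, h2⟩
          exact hav3 ⟨y, b, c, List.Sublist.cons_cons y hs, h1, h2⟩
        · exact (hav2 y hy).mono (List.sublist_cons_self x rest)
    · rw [apply_push_cons]; simp; omega
  
lemma reach {n : ℕ} (N : ℕ) : ∀ c : Conf,
    2 * c.input.length + (c.stks.getD 0 []).length ≤ N → Good n c →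
    ∃ ms, runLegal 1 c ms = some (finalConf 1 n) := by
  induction N with
  | zero =>
    intro c hN hg
    by_cases h : c = finalConf 1 n
    · exact ⟨[], by simp [runLegal, h]⟩
    · obtain ⟨m, hl, hg', hm⟩ := good_step hg h
      omega
  | succ N ih =>
    intro c hN hg
    by_cases h : c = finalConf 1 n
    · exact ⟨[], by simp [runLegal, h]⟩
    · obtain ⟨m, hl, hg', hm⟩ := good_step hg h
      obtain ⟨ms, hms⟩ := ih _ (by omega) hg'
      exact ⟨m :: ms, by rw [runLegal, if_pos hl]; exact hms⟩

lemma pat3_iff (l : List ℕ) :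
    (∃ i j k : ℕ, i < j ∧ j < k ∧ k < l.length ∧ l.getD k 0 < l.getD i 0 ∧ l.getD i 0 < l.getD j 0)
    ↔ ∃ a b c : ℕ, List.Sublist [a,b,c] l ∧ c < a ∧ a < b := by
  constructor
  · rintro ⟨i, j, k, hij, hjk, hk, h1, h2⟩
    have hi : i < l.length := by omega
    have hj : j < l.length := by omega
    refine ⟨l[i], l[j], l[k], ?_, ?_, ?_⟩
    · have := List.map_getElem_sublist (l := l) (is := [⟨i, hi⟩, ⟨j, hj⟩, ⟨k, hk⟩]) (by
        simp [List.pairwise_cons]; omega)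
      simpa using this
    · rw [List.getD_eq_getElem l 0 hk, List.getD_eq_getElem l 0 hi] at h1; exact h1
    · rw [List.getD_eq_getElem l 0 hj, List.getD_eq_getElem l 0 hi] at h2; exact h2
  · rintro ⟨a, b, c, hs, h1, h2⟩
    obtain ⟨is, heq, hpw⟩ := List.sublist_eq_map_getElem hs
    match is, heq with
    | [i, j, k], heq =>
      simp only [List.map_cons, List.map_nil, List.cons.injEq] at heq
      obtain ⟨ha, hb, hc, -⟩ := heq
      simp only [Fin.getElem_fin] at ha hb hc
      refine ⟨i, j, k, ?_, ?_, k.isLt, ?_, ?_⟩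
      · have := hpw; simp [List.pairwise_cons] at this; omega
      · have := hpw; simp [List.pairwise_cons] at this; omega
      · rw [List.getD_eq_getElem l 0 k.isLt, List.getD_eq_getElem l 0 i.isLt]
        omega
      · rw [List.getD_eq_getElem l 0 j.isLt, List.getD_eq_getElem l 0 i.isLt]
        omega

end StackSortAux
/-- A permutation of length `n` is sortable by a single stack iff it avoids `231`. -/
theorem stmt1 (n : ℕ) (p : List ℕ) (hp : IsPermOf n p) :
    Sortable 1 p ↔
      ¬ ∃ i j k : ℕ, i < j ∧ j < k ∧ k < p.length ∧
        p.getD k 0 < p.getD i 0 ∧ p.getD i 0 < p.getD j 0 := by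
  have hlen : p.length = n := by simpa using hp.length_eq
  rw [pat3_iff]
  constructor
  · rintro ⟨ms, hms⟩
    have hg : Good p.length (initConf 1 p) := good_of_run ms _ hms
    obtain ⟨s, hstks, -, -, -, hav3, -⟩ := hg
    exact hav3
  · intro hav
    have hg : Good n (initConf 1 p) := by
      refine ⟨[], rfl, by simp [initConf], by simpa [initConf, IsPermOf] using hp, by simp, hav, by simp⟩
    obtain ⟨ms, hms⟩ := reach (2 * p.length) _ (by simp [initConf]) hg
    exact ⟨ms, by rw [hlen]; exact hms⟩
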